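/- Let α₁, α₂, α₃, α₄, β₁, β₂, β₃ be positive reals and γ₁, γ₂, δ₁, δ₂, δ₃ positive reals. If Δ₁ = α₃ + α₄ − α₁ − α₂ > 0 and Δ₂ = β₂ + β₃ − β₁ > 0, then for every x, y ∈ ℂ the double series ∑_{m=0}^∞ ∑_{k=0}^∞ [Γ(α₁m+β₁k+γ₁) Γ(α₂m+γ₂) / (Γ(γ₁) Γ(γ₂) Γ(α₃m+β₂k+δ₁))] · x^m/Γ(α₄m+δ₂) · y^k/Γ(β₃k+δ₃) converges absolutely (the doubly-indexed family of terms is summable over ℕ × ℕ). -/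

import Mathlib

open Real
open scoped Nat


lemma fact_lower (n : ℕ) : Real.exp (n * Real.log n - n) ≤ n ! := by
  rcases Nat.eq_zero_or_pos n with h | h
  · simp [h]
  · have hn : (0:ℝ) < n := by exact_mod_cast h
    have h1 : (n:ℝ)^n / n ! ≤ Real.exp n := Real.pow_div_factorial_le_exp (x := (n:ℝ)) hn.le n
    have h2 : (n:ℝ)^n = Real.exp (n * Real.log n) := by
      rw [← Real.exp_log hn, ← Real.exp_nat_mul, Real.exp_log hn]
    have h3 : (0:ℝ) < n ! := by exact_mod_cast n.factorial_pos
    rw [div_le_iff₀ h3] at h1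
    rw [Real.exp_sub, div_le_iff₀ (Real.exp_pos _)]
    calc Real.exp (n * Real.log n) = (n:ℝ)^n := h2.symm
      _ ≤ n ! * Real.exp n := by linarith

lemma gamma_upper_of_two_le {t : ℝ} (ht : 2 ≤ t) : Real.Gamma t ≤ Real.exp (t * Real.log t) := by
  have ht0 : (0:ℝ) < t := by linarith
  set n := ⌈t⌉₊ with hn
  have htn : t ≤ n := Nat.le_ceil t
  have hn2 : 2 ≤ n := by exact_mod_cast ht.trans htn
  have h1 : Real.Gamma t ≤ Real.Gamma n :=
    Real.Gamma_strictMonoOn_Ici.monotoneOn ht (by simpa using ht.trans htn) htn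
  have hcast : ((n-1:ℕ):ℝ) = (n:ℝ) - 1 := by
    push_cast [Nat.cast_sub (by omega : 1 ≤ n)]; ring
  have h2 : Real.Gamma (n:ℝ) = (n-1)! := by
    have := Real.Gamma_nat_eq_factorial (n-1)
    rwa [hcast, sub_add_cancel] at this
  have h3 : ((n-1)! : ℝ) ≤ ((n-1:ℕ):ℝ)^(n-1) := by exact_mod_cast Nat.factorial_le_pow (n-1)
  have h4 : ((n-1:ℕ):ℝ) ≤ t := by
    have := Nat.ceil_lt_add_one ht0.le
    rw [hcast]; linarith
  have h40 : (0:ℝ) ≤ ((n-1:ℕ):ℝ) := Nat.cast_nonneg _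
  have h5 : ((n-1:ℕ):ℝ)^(n-1) ≤ t^(n-1) := pow_le_pow_left₀ h40 h4 _
  have h6 : t^(n-1) = Real.exp (((n-1:ℕ):ℝ) * Real.log t) := by
    rw [← Real.exp_log ht0, ← Real.exp_nat_mul, Real.exp_log ht0]
  have h7 : ((n-1:ℕ):ℝ) * Real.log t ≤ t * Real.log t :=
    mul_le_mul_of_nonneg_right h4 (Real.log_nonneg (by linarith))
  calc Real.Gamma t ≤ ((n-1)! : ℝ) := h2 ▸ h1
    _ ≤ ((n-1:ℕ):ℝ)^(n-1) := h3
    _ ≤ t^(n-1) := h5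
    _ = Real.exp (((n-1:ℕ):ℝ) * Real.log t) := h6
    _ ≤ Real.exp (t * Real.log t) := Real.exp_le_exp.2 h7


lemma gamma_contOn {a b : ℝ} (ha : 0 < a) : ContinuousOn Real.Gamma (Set.Icc a b) := by
  intro t ht
  have ht0 : 0 < t := lt_of_lt_of_le ha ht.1
  refine (Real.differentiableAt_Gamma ?_).continuousAt.continuousWithinAt
  intro m
  have hm : (0:ℝ) ≤ m := m.cast_nonneg
  intro h
  rw [h] at ht0
  linarith

lemma gamma_upper {c : ℝ} (hc : 0 < c) :
    ∃ C : ℝ, 0 ≤ C ∧ ∀ t, c ≤ t → Real.Gamma t ≤ Real.exp (t * Real.log t + C * (t+1)) := by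
  obtain ⟨M, hM⟩ := (isCompact_Icc (a := c) (b := 2)).bddAbove_image (gamma_contOn hc)
  have hlog : 0 ≤ Real.log (max M 1) := Real.log_nonneg (le_max_right _ _)
  refine ⟨Real.log (max M 1) + 1, by linarith, fun t htc => ?_⟩
  have ht0 : 0 < t := lt_of_lt_of_le hc htc
  have htlog : t - 1 ≤ t * Real.log t := by
    have h := Real.log_le_sub_one_of_pos (x := t⁻¹) (by positivity)
    rw [Real.log_inv] at h
    have h2 := mul_le_mul_of_nonneg_left h ht0.le
    have h3 : t * t⁻¹ = 1 := mul_inv_cancel₀ ht0.ne'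
    nlinarith
  rcases le_or_gt t 2 with h2 | h2
  · have hΓM : Real.Gamma t ≤ M := hM ⟨t, ⟨htc, h2⟩, rfl⟩
    have h3 : M ≤ max M 1 := le_max_left _ _
    have h4 : max M 1 = Real.exp (Real.log (max M 1)) :=
      (Real.exp_log (by have := le_max_right M 1; linarith)).symm
    calc Real.Gamma t ≤ max M 1 := hΓM.trans h3
      _ = Real.exp (Real.log (max M 1)) := h4
      _ ≤ Real.exp (t * Real.log t + (Real.log (max M 1) + 1) * (t+1)) := by
          refine Real.exp_le_exp.2 ?_
          nlinarith [mul_nonneg (by linarith : (0:ℝ) ≤ Real.log (max M 1) + 1) ht0.le]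
  · refine (gamma_upper_of_two_le h2.le).trans (Real.exp_le_exp.2 ?_)
    nlinarith [mul_nonneg (by linarith : (0:ℝ) ≤ Real.log (max M 1) + 1) (by linarith : (0:ℝ) ≤ t + 1)]

lemma gamma_lower {c : ℝ} (hc : 0 < c) :
    ∃ C : ℝ, 0 ≤ C ∧ ∀ t, c ≤ t → Real.exp (t * Real.log t - C * (t+1)) ≤ Real.Gamma t := by
  set d := max c 3 with hd
  have hd3 : (3:ℝ) ≤ d := le_max_right _ _
  have hcd : c ≤ d := le_max_left _ _
  obtain ⟨t₀, ht₀mem, ht₀min⟩ :=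
    (isCompact_Icc (a := c) (b := d)).exists_isMinOn ⟨c, le_refl c, hcd⟩ (gamma_contOn hc)
  set ε := Real.Gamma t₀ with hε
  have hε0 : 0 < ε := Real.Gamma_pos_of_pos (lt_of_lt_of_le hc ht₀mem.1)
  set C := max 3 (d^2 - Real.log ε) with hC
  have hC3 : (3:ℝ) ≤ C := le_max_left _ _
  refine ⟨C, by linarith, fun t htc => ?_⟩
  have ht0 : 0 < t := lt_of_lt_of_le hc htc
  rcases le_or_gt t d with hle | hgt
  · -- small case
    have hεt : ε ≤ Real.Gamma t := ht₀min ⟨htc, hle⟩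
    have h1 : t * Real.log t ≤ d^2 := by
      have hlt : Real.log t ≤ t - 1 := Real.log_le_sub_one_of_pos ht0
      rcases le_or_gt t 1 with h | h
      · have : Real.log t ≤ 0 := Real.log_nonpos ht0.le h
        nlinarith
      · nlinarith
    have h2 : C ≤ C * (t+1) := by nlinarith
    have : t * Real.log t - C * (t+1) ≤ Real.log ε := by
      have := le_max_right 3 (d^2 - Real.log ε)
      have hC2 : d^2 - Real.log ε ≤ C := this
      linarith
    calc Real.exp (t * Real.log t - C * (t+1)) ≤ Real.exp (Real.log ε) := Real.exp_le_exp.2 this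
      _ = ε := Real.exp_log hε0
      _ ≤ Real.Gamma t := hεt
  · -- large case : t > d ≥ 3
    have ht3 : (3:ℝ) < t := lt_of_le_of_lt hd3 hgt
    set n := ⌊t⌋₊ with hn
    have hnt : (n:ℝ) ≤ t := Nat.floor_le ht0.le
    have htn1 : t < n + 1 := Nat.lt_floor_add_one t
    have hn3 : 3 ≤ n := by
      have h2n : (2:ℝ) < n := by linarith
      have : 2 < n := by exact_mod_cast h2n
      omega
    have hcast : ((n-1:ℕ):ℝ) = (n:ℝ) - 1 := by
      push_cast [Nat.cast_sub (by omega : 1 ≤ n)]; ring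
    set s : ℝ := (n:ℝ) - 1 with hs
    have hs2 : (2:ℝ) ≤ s := by
      have : (3:ℝ) ≤ n := by exact_mod_cast hn3
      simp only [hs]; linarith
    have hst : s ≤ t - 1 := by simp only [hs]; linarith
    have hts : t - 2 ≤ s := by simp only [hs]; linarith
    -- Gamma n = (n-1)!
    have hΓn : Real.Gamma (n:ℝ) = (n-1)! := by
      have := Real.Gamma_nat_eq_factorial (n-1)
      rwa [hcast, sub_add_cancel] at this
    have hmono : Real.Gamma (n:ℝ) ≤ Real.Gamma t := by
      refine Real.Gamma_strictMonoOn_Ici.monotoneOn ?_ ?_ hnt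
      · simp only [Set.mem_Ici]; linarith
      · simp only [Set.mem_Ici]; linarith
    have hfact : Real.exp (s * Real.log s - s) ≤ ((n-1)! : ℝ) := by
      have := fact_lower (n-1)
      rwa [hcast] at this
    -- key inequality: t log t - C(t+1) ≤ s log s - s
    have hkey : t * Real.log t - C * (t+1) ≤ s * Real.log s - s := by
      have hs0 : (0:ℝ) < s := by linarith
      have hlogts : Real.log t - Real.log s = Real.log (t / s) := (Real.log_div ht0.ne' hs0.ne').symm
      have h1 : Real.log (t / s) ≤ t / s - 1 := Real.log_le_sub_one_of_pos (by positivity)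
      have h2 : s * Real.log (t/s) ≤ t - s := by
        have := mul_le_mul_of_nonneg_left h1 hs0.le
        have h3 : s * (t/s - 1) = t - s := by field_simp
        linarith
      have h4 : Real.log t ≤ t - 1 := Real.log_le_sub_one_of_pos ht0
      have h5 : 0 ≤ Real.log t := Real.log_nonneg (by linarith)
      have h6 : (t - s) * Real.log t ≤ 2 * (t-1) := by nlinarith
      -- t log t - s log s = (t-s) log t + s log(t/s) ≤ 2(t-1) + (t-s) ≤ 2t
      have h7 : t * Real.log t - s * Real.log s = (t - s) * Real.log t + s * Real.log (t/s) := by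
        rw [← hlogts]; ring
      have h8 : C * (t+1) ≥ 3 * (t+1) := by nlinarith
      have h9 : t - s ≤ 2 := by linarith
      have h10 : t * Real.log t - s * Real.log s ≤ 2*(t-1) + (t-s) := by
        rw [h7]; exact add_le_add h6 h2
      linarith [h10, h8, hst]
    calc Real.exp (t * Real.log t - C * (t+1)) ≤ Real.exp (s * Real.log s - s) :=
          Real.exp_le_exp.2 hkey
      _ ≤ ((n-1)! : ℝ) := hfact
      _ = Real.Gamma (n:ℝ) := hΓn.symm
      _ ≤ Real.Gamma t := hmono
set_option maxHeartbeats 2000000 in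
/-- Summability (absolute convergence) of the double series
defining the bivariate Mittag-Leffler type function `E₂` with parameters
`(α₁,β₁,γ₁; α₂,γ₂; α₃,β₂,δ₁; α₄,δ₂; β₃,δ₃)` at any `x, y ∈ ℂ`, provided
`Δ₁ = α₃ + α₄ − α₁ − α₂ > 0` and `Δ₂ = β₂ + β₃ − β₁ > 0`. -/
theorem bivariate_mittagLeffler_summable
    (α₁ α₂ α₃ α₄ β₁ β₂ β₃ γ₁ γ₂ δ₁ δ₂ δ₃ : ℝ)
    (hα₁ : 0 < α₁) (hα₂ : 0 < α₂) (hα₃ : 0 < α₃) (hα₄ : 0 < α₄)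
    (hβ₁ : 0 < β₁) (hβ₂ : 0 < β₂) (hβ₃ : 0 < β₃)
    (hγ₁ : 0 < γ₁) (hγ₂ : 0 < γ₂) (hδ₁ : 0 < δ₁) (hδ₂ : 0 < δ₂) (hδ₃ : 0 < δ₃)
    (hΔ₁ : 0 < α₃ + α₄ - α₁ - α₂) (hΔ₂ : 0 < β₂ + β₃ - β₁)
    (x y : ℂ) :
    Summable (fun mk : ℕ × ℕ =>
      ((Real.Gamma (α₁ * mk.1 + β₁ * mk.2 + γ₁) * Real.Gamma (α₂ * mk.1 + γ₂) /
          (Real.Gamma γ₁ * Real.Gamma γ₂ *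
            Real.Gamma (α₃ * mk.1 + β₂ * mk.2 + δ₁)) : ℝ) : ℂ) *
        (x ^ mk.1 / (Real.Gamma (α₄ * mk.1 + δ₂) : ℂ)) *
        (y ^ mk.2 / (Real.Gamma (β₃ * mk.2 + δ₃) : ℂ))) := by
  set c₀ : ℝ := min γ₁ (min γ₂ (min δ₁ (min δ₂ δ₃))) with hc₀def
  have hc₀ : 0 < c₀ := by
    simp only [hc₀def, lt_min_iff]
    exact ⟨hγ₁, hγ₂, hδ₁, hδ₂, hδ₃⟩
  have hc₀γ₁ : c₀ ≤ γ₁ := min_le_left _ _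
  have hc₀γ₂ : c₀ ≤ γ₂ := (min_le_right _ _).trans (min_le_left _ _)
  have hc₀δ₁ : c₀ ≤ δ₁ := (min_le_right _ _).trans ((min_le_right _ _).trans (min_le_left _ _))
  have hc₀δ₂ : c₀ ≤ δ₂ :=
    (min_le_right _ _).trans ((min_le_right _ _).trans ((min_le_right _ _).trans (min_le_left _ _)))
  have hc₀δ₃ : c₀ ≤ δ₃ :=
    (min_le_right _ _).trans ((min_le_right _ _).trans ((min_le_right _ _).trans (min_le_right _ _)))
  obtain ⟨Cu, hCu0, hCu⟩ := gamma_upper hc₀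
  obtain ⟨Cl, hCl0, hCl⟩ := gamma_lower hc₀
  set A : ℝ := α₁ + α₂ + α₃ + α₄ + β₁ + β₂ + β₃ + γ₁ + γ₂ + δ₁ + δ₂ + δ₃ + 1 with hAdef
  have hA1 : 1 ≤ A := by simp only [hAdef]; linarith
  have hA0 : 0 < A := by linarith
  have hlogA : 0 ≤ Real.log A := Real.log_nonneg hA1
  have hA_α₁ : α₁ ≤ A := by simp only [hAdef]; linarith
  have hA_α₂ : α₂ ≤ A := by simp only [hAdef]; linarith
  have hA_α₃ : α₃ ≤ A := by simp only [hAdef]; linarith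
  have hA_α₄ : α₄ ≤ A := by simp only [hAdef]; linarith
  have hA_β₁ : β₁ ≤ A := by simp only [hAdef]; linarith
  have hA_β₂ : β₂ ≤ A := by simp only [hAdef]; linarith
  have hA_β₃ : β₃ ≤ A := by simp only [hAdef]; linarith
  have hA_γ₁ : γ₁ ≤ A := by simp only [hAdef]; linarith
  have hA_γ₂ : γ₂ ≤ A := by simp only [hAdef]; linarith
  have hA_δ₁ : δ₁ ≤ A := by simp only [hAdef]; linarith
  have hA_δ₂ : δ₂ ≤ A := by simp only [hAdef]; linarith
  have hA_δ₃ : δ₃ ≤ A := by simp only [hAdef]; linarith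
  set R : ℝ := max (max ‖x‖ ‖y‖) 1 with hRdef
  have hR1 : 1 ≤ R := le_max_right _ _
  have hR0 : 0 < R := by linarith
  have hlogR : 0 ≤ Real.log R := Real.log_nonneg hR1
  have hxR : ‖x‖ ≤ R := (le_max_left _ _).trans (le_max_left _ _)
  have hyR : ‖y‖ ≤ R := (le_max_right _ _).trans (le_max_left _ _)
  set G' : ℝ := Real.Gamma γ₁ * Real.Gamma γ₂ with hG'def
  have hG'0 : 0 < G' :=
    mul_pos (Real.Gamma_pos_of_pos hγ₁) (Real.Gamma_pos_of_pos hγ₂)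
  set Δa : ℝ := α₃ + α₄ - α₁ - α₂ with hΔadef
  set Δb : ℝ := β₂ + β₃ - β₁ with hΔbdef
  set δm : ℝ := min Δa Δb with hδmdef
  have hδm0 : 0 < δm := lt_min hΔ₁ hΔ₂
  have hδmΔa : δm ≤ Δa := min_le_left _ _
  have hδmΔb : δm ≤ Δb := min_le_right _ _
  set Ad0 : ℝ := |δ₁ + δ₂ + δ₃ - γ₁ - γ₂| with hAd0def
  have hAd00 : 0 ≤ Ad0 := abs_nonneg _
  have hAd0l : -(Ad0) ≤ δ₁ + δ₂ + δ₃ - γ₁ - γ₂ := neg_abs_le _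
  set B₂ : ℝ := 2*A*Real.log A + Cu*(2*A+2) + Cl*(3*A+3) + 3 + Real.log R + Real.log 2
      + |Real.log G'| + Ad0 with hB₂def
  have hlog2 : (0:ℝ) ≤ Real.log 2 := Real.log_nonneg (by norm_num)
  have habsG : (0:ℝ) ≤ |Real.log G'| := abs_nonneg _
  have hB₂0 : 0 ≤ B₂ := by
    have h4 : (0:ℝ) ≤ 2*A*Real.log A := by positivity
    have h5 : (0:ℝ) ≤ Cu*(2*A+2) := by positivity
    have h6 : (0:ℝ) ≤ Cl*(3*A+3) := by positivity
    simp only [hB₂def]; linarith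
  set NB : ℕ := ⌈Real.exp (2*B₂/δm)⌉₊ + 1 with hNBdef
  have main : ∀ m k : ℕ, NB ≤ m + k →
      ‖((Real.Gamma (α₁ * m + β₁ * k + γ₁) * Real.Gamma (α₂ * m + γ₂) /
          (Real.Gamma γ₁ * Real.Gamma γ₂ *
            Real.Gamma (α₃ * m + β₂ * k + δ₁)) : ℝ) : ℂ) *
        (x ^ m / (Real.Gamma (α₄ * m + δ₂) : ℂ)) *
        (y ^ k / (Real.Gamma (β₃ * k + δ₃) : ℂ))‖ ≤ (1/2:ℝ)^m * (1/2:ℝ)^k := by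
    intro m k hmk
    set a : ℝ := (m:ℝ) with hadef
    set b : ℝ := (k:ℝ) with hbdef
    have ha : 0 ≤ a := Nat.cast_nonneg m
    have hb : 0 ≤ b := Nat.cast_nonneg k
    have hKN : (NB:ℝ) ≤ a + b := by
      simp only [hadef, hbdef]
      exact_mod_cast hmk
    have hNB1 : (1:ℝ) ≤ (NB:ℝ) := by
      have : 1 ≤ NB := by omega
      exact_mod_cast this
    have hK1 : 1 ≤ a + b := le_trans hNB1 hKN
    set L : ℝ := Real.log (a + b + 1) with hLdef
    have hL0 : 0 ≤ L := Real.log_nonneg (by linarith)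
    have hLK : L ≤ a + b + 1 := by
      have := Real.log_le_sub_one_of_pos (show (0:ℝ) < a + b + 1 by linarith)
      simp only [hLdef]
      linarith
    have hLB : 2*B₂/δm ≤ L := by
      have hceil : Real.exp (2*B₂/δm) ≤ (⌈Real.exp (2*B₂/δm)⌉₊ : ℝ) := Nat.le_ceil _
      have hNBr : ((⌈Real.exp (2*B₂/δm)⌉₊ : ℕ):ℝ) + 1 = (NB:ℝ) := by
        simp only [hNBdef]; push_cast; ring
      have hexp : Real.exp (2*B₂/δm) ≤ a + b + 1 := by linarith
      rw [hLdef]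
      exact (Real.le_log_iff_exp_le (by linarith)).2 hexp
    have hδL : 2*B₂ ≤ δm*L := by
      rw [div_le_iff₀ hδm0] at hLB
      linarith
    set t1 : ℝ := α₁ * a + β₁ * b + γ₁ with ht1
    set t2 : ℝ := α₂ * a + γ₂ with ht2
    set t3 : ℝ := α₃ * a + β₂ * b + δ₁ with ht3
    set t4 : ℝ := α₄ * a + δ₂ with ht4
    set t5 : ℝ := β₃ * b + δ₃ with ht5
    have hct1 : c₀ ≤ t1 := by
      simp only [ht1]; linarith [mul_nonneg hα₁.le ha, mul_nonneg hβ₁.le hb]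
    have hct2 : c₀ ≤ t2 := by simp only [ht2]; linarith [mul_nonneg hα₂.le ha]
    have hct3 : c₀ ≤ t3 := by
      simp only [ht3]; linarith [mul_nonneg hα₃.le ha, mul_nonneg hβ₂.le hb]
    have hct4 : c₀ ≤ t4 := by simp only [ht4]; linarith [mul_nonneg hα₄.le ha]
    have hct5 : c₀ ≤ t5 := by simp only [ht5]; linarith [mul_nonneg hβ₃.le hb]
    have ht10 : 0 < t1 := lt_of_lt_of_le hc₀ hct1
    have ht20 : 0 < t2 := lt_of_lt_of_le hc₀ hct2
    have ht30 : 0 < t3 := lt_of_lt_of_le hc₀ hct3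
    have ht40 : 0 < t4 := lt_of_lt_of_le hc₀ hct4
    have ht50 : 0 < t5 := lt_of_lt_of_le hc₀ hct5
    have ht1A : t1 ≤ A*(a+b+1) := by
      have h1 := mul_le_mul_of_nonneg_right hA_α₁ ha
      have h2 := mul_le_mul_of_nonneg_right hA_β₁ hb
      simp only [ht1]; linarith [hA_γ₁]
    have ht2A : t2 ≤ A*(a+b+1) := by
      have h1 := mul_le_mul_of_nonneg_right hA_α₂ ha
      have h2 : 0 ≤ A*b := mul_nonneg hA0.le hb
      simp only [ht2]; linarith [hA_γ₂]
    have ht3A : t3 ≤ A*(a+b+1) := by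
      have h1 := mul_le_mul_of_nonneg_right hA_α₃ ha
      have h2 := mul_le_mul_of_nonneg_right hA_β₂ hb
      simp only [ht3]; linarith [hA_δ₁]
    have ht4A : t4 ≤ A*(a+b+1) := by
      have h1 := mul_le_mul_of_nonneg_right hA_α₄ ha
      have h2 : 0 ≤ A*b := mul_nonneg hA0.le hb
      simp only [ht4]; linarith [hA_δ₂]
    have ht5A : t5 ≤ A*(a+b+1) := by
      have h1 := mul_le_mul_of_nonneg_right hA_β₃ hb
      have h2 : 0 ≤ A*a := mul_nonneg hA0.le ha
      simp only [ht5]; linarith [hA_δ₃]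
    -- upper bounds for numerator Gammas
    have hup : ∀ t : ℝ, c₀ ≤ t → t ≤ A*(a+b+1) →
        Real.Gamma t ≤ Real.exp (t*L + t*Real.log A + Cu*(t+1)) := by
      intro t hct htA
      refine (hCu t hct).trans (Real.exp_le_exp.2 ?_)
      have ht0' : 0 < t := lt_of_lt_of_le hc₀ hct
      have hlt : Real.log t ≤ Real.log A + L := by
        have h1 : Real.log t ≤ Real.log (A*(a+b+1)) :=
          Real.log_le_log ht0' htA
        rw [Real.log_mul hA0.ne' (by linarith : a+b+1 ≠ 0)] at h1
        simp only [hLdef]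
        linarith
      have h2 := mul_le_mul_of_nonneg_left hlt ht0'.le
      have h3 : t * (Real.log A + L) = t*Real.log A + t*L := by ring
      linarith
    have hu1 := hup t1 hct1 ht1A
    have hu2 := hup t2 hct2 ht2A
    -- lower bounds for denominator Gammas
    have hlo : ∀ t : ℝ, c₀ ≤ t →
        Real.exp (t*L - (a+b+1) - Cl*(t+1)) ≤ Real.Gamma t := by
      intro t hct
      refine le_trans (Real.exp_le_exp.2 ?_) (hCl t hct)
      have ht0' : 0 < t := lt_of_lt_of_le hc₀ hct
      have hq : (0:ℝ) < (a+b+1)/t := by positivity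
      have h1 : Real.log ((a+b+1)/t) ≤ (a+b+1)/t - 1 := Real.log_le_sub_one_of_pos hq
      have h2 : Real.log ((a+b+1)/t) = L - Real.log t := by
        rw [Real.log_div (by linarith : a+b+1 ≠ 0) ht0'.ne']
      rw [h2] at h1
      have h3 := mul_le_mul_of_nonneg_left h1 ht0'.le
      have h4 : t * ((a+b+1)/t - 1) = (a+b+1) - t := by field_simp
      have h5 : t*L - t*Real.log t ≤ (a+b+1) - t := by
        calc t*L - t*Real.log t = t*(L - Real.log t) := by ring
          _ ≤ t*((a+b+1)/t - 1) := h3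
          _ = (a+b+1) - t := h4
      linarith [ht0'.le]
    have hl3 := hlo t3 hct3
    have hl4 := hlo t4 hct4
    have hl5 := hlo t5 hct5
    -- power bounds
    have hX : ‖x‖^m ≤ Real.exp (a*Real.log R) := by
      have h1 : ‖x‖^m ≤ R^m := pow_le_pow_left₀ (norm_nonneg x) hxR m
      have h2 : R^m = Real.exp (a*Real.log R) := by
        rw [hadef, Real.exp_nat_mul, Real.exp_log hR0]
      linarith
    have hY : ‖y‖^k ≤ Real.exp (b*Real.log R) := by
      have h1 : ‖y‖^k ≤ R^k := pow_le_pow_left₀ (norm_nonneg y) hyR k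
      have h2 : R^k = Real.exp (b*Real.log R) := by
        rw [hbdef, Real.exp_nat_mul, Real.exp_log hR0]
      linarith
    have e1 : Real.exp (-(a*Real.log 2)) = (1/2:ℝ)^m := by
      have h : -(a * Real.log 2) = a * Real.log 2⁻¹ := by rw [Real.log_inv]; ring
      rw [h, hadef, Real.exp_nat_mul, Real.exp_log (by norm_num : (0:ℝ) < 2⁻¹)]
      norm_num
    have e2 : Real.exp (-(b*Real.log 2)) = (1/2:ℝ)^k := by
      have h : -(b * Real.log 2) = b * Real.log 2⁻¹ := by rw [Real.log_inv]; ring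
      rw [h, hbdef, Real.exp_nat_mul, Real.exp_log (by norm_num : (0:ℝ) < 2⁻¹)]
      norm_num
    -- the big exponent inequality
    have bigineq : (t1*L + t1*Real.log A + Cu*(t1+1)) + (t2*L + t2*Real.log A + Cu*(t2+1))
        + a*Real.log R + b*Real.log R
        ≤ -(a*Real.log 2) + -(b*Real.log 2) + (Real.log G'
          + ((t3*L - (a+b+1) - Cl*(t3+1)) + (t4*L - (a+b+1) - Cl*(t4+1))
            + (t5*L - (a+b+1) - Cl*(t5+1)))) := by
      have hsum : t3 + t4 + t5 - t1 - t2 = Δa*a + Δb*b + (δ₁ + δ₂ + δ₃ - γ₁ - γ₂) := by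
        simp only [ht1, ht2, ht3, ht4, ht5, hΔadef, hΔbdef]; ring
      have FL : t3*L + t4*L + t5*L - t1*L - t2*L
          = Δa*(a*L) + Δb*(b*L) + (δ₁ + δ₂ + δ₃ - γ₁ - γ₂)*L := by
        linear_combination L * hsum
      have faL : 0 ≤ a*L := mul_nonneg ha hL0
      have fbL : 0 ≤ b*L := mul_nonneg hb hL0
      have fΔ1 : δm*(a*L) ≤ Δa*(a*L) := mul_le_mul_of_nonneg_right hδmΔa faL
      have fΔ2 : δm*(b*L) ≤ Δb*(b*L) := mul_le_mul_of_nonneg_right hδmΔb fbL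
      have fd0 : -(Ad0*(a+b+1)) ≤ (δ₁ + δ₂ + δ₃ - γ₁ - γ₂)*L := by
        have h1 : -(Ad0) * L ≤ (δ₁ + δ₂ + δ₃ - γ₁ - γ₂)*L :=
          mul_le_mul_of_nonneg_right hAd0l hL0
        have h2 : Ad0 * L ≤ Ad0 * (a+b+1) := mul_le_mul_of_nonneg_left hLK hAd00
        linarith [h1, h2]
      have f3 : (a+b)*(2*B₂) ≤ (a+b)*(δm*L) :=
        mul_le_mul_of_nonneg_left hδL (by linarith)
      have f4 : 0 ≤ B₂*(a+b-1) := mul_nonneg hB₂0 (by linarith)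
      have f5 : B₂*(a+b+1) = (2*A*Real.log A)*(a+b+1) + (Cu*(2*A+2))*(a+b+1)
          + (Cl*(3*A+3))*(a+b+1) + 3*(a+b+1) + Real.log R*(a+b+1) + Real.log 2*(a+b+1)
          + |Real.log G'| * (a+b+1) + Ad0*(a+b+1) := by
        linear_combination (a+b+1) * hB₂def
      have g1 : (t1 + t2)*Real.log A ≤ (2*A*(a+b+1))*Real.log A :=
        mul_le_mul_of_nonneg_right (by linarith) hlogA
      have g2 : Cu*(t1+1) + Cu*(t2+1) ≤ (Cu*(2*A+2))*(a+b+1) := by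
        have h1 : t1 + t2 + 2 ≤ (2*A+2)*(a+b+1) := by linarith [ht1A, ht2A, hK1]
        have h2 : Cu*(t1+t2+2) ≤ Cu*((2*A+2)*(a+b+1)) := mul_le_mul_of_nonneg_left h1 hCu0
        linarith [h2]
      have g3 : Cl*(t3+1) + Cl*(t4+1) + Cl*(t5+1) ≤ (Cl*(3*A+3))*(a+b+1) := by
        have h1 : t3 + t4 + t5 + 3 ≤ (3*A+3)*(a+b+1) := by linarith [ht3A, ht4A, ht5A, hK1]
        have h2 : Cl*(t3+t4+t5+3) ≤ Cl*((3*A+3)*(a+b+1)) := mul_le_mul_of_nonneg_left h1 hCl0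
        linarith [h2]
      have gG : -Real.log G' ≤ |Real.log G'| * (a+b+1) := by
        have h1 : -Real.log G' ≤ |Real.log G'| := neg_le_abs _
        have h2 : |Real.log G'| ≤ |Real.log G'| * (a+b+1) :=
          le_mul_of_one_le_right habsG (by linarith)
        linarith
      have gR : (a+b)*Real.log R ≤ Real.log R*(a+b+1) := by linarith [hlogR]
      have g2' : (a+b)*Real.log 2 ≤ Real.log 2*(a+b+1) := by linarith [hlog2]
      have hfin : B₂*(a+b+1) ≤ δm*(a*L) + δm*(b*L) := by linarith [f3, f4]
      linarith [FL, fΔ1, fΔ2, fd0, g1, g2, g3, gG, gR, g2', hfin, f5]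
    -- assemble
    have hr0 : 0 ≤ Real.Gamma t1 * Real.Gamma t2 / (Real.Gamma γ₁ * Real.Gamma γ₂ * Real.Gamma t3) := by
      have := Real.Gamma_pos_of_pos ht10
      have := Real.Gamma_pos_of_pos ht20
      have := Real.Gamma_pos_of_pos ht30
      positivity
    have hnorm : ‖((Real.Gamma t1 * Real.Gamma t2 /
          (Real.Gamma γ₁ * Real.Gamma γ₂ * Real.Gamma t3) : ℝ) : ℂ) *
        (x ^ m / (Real.Gamma t4 : ℂ)) * (y ^ k / (Real.Gamma t5 : ℂ))‖
        = (Real.Gamma t1 * Real.Gamma t2 * (‖x‖^m * ‖y‖^k))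
          / (Real.Gamma γ₁ * Real.Gamma γ₂ * Real.Gamma t3 * (Real.Gamma t4 * Real.Gamma t5)) := by
      rw [norm_mul, norm_mul, norm_div, norm_div, norm_pow, norm_pow,
        Complex.norm_real, Complex.norm_real, Complex.norm_real,
        Real.norm_eq_abs, Real.norm_eq_abs, Real.norm_eq_abs,
        abs_of_nonneg hr0, abs_of_nonneg (Real.Gamma_pos_of_pos ht40).le,
        abs_of_nonneg (Real.Gamma_pos_of_pos ht50).le]
      field_simp
    have hD0 : 0 < Real.Gamma γ₁ * Real.Gamma γ₂ * Real.Gamma t3 * (Real.Gamma t4 * Real.Gamma t5) := by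
      have := Real.Gamma_pos_of_pos ht30
      have := Real.Gamma_pos_of_pos ht40
      have := Real.Gamma_pos_of_pos ht50
      positivity
    rw [hnorm, div_le_iff₀ hD0]
    have hG1 := Real.Gamma_pos_of_pos ht10
    have hG2 := Real.Gamma_pos_of_pos ht20
    calc Real.Gamma t1 * Real.Gamma t2 * (‖x‖^m * ‖y‖^k)
        ≤ Real.exp (t1*L + t1*Real.log A + Cu*(t1+1))
          * Real.exp (t2*L + t2*Real.log A + Cu*(t2+1))
          * (Real.exp (a*Real.log R) * Real.exp (b*Real.log R)) := by
          have hxm : 0 ≤ ‖x‖^m := by positivity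
          have hyk : 0 ≤ ‖y‖^k := by positivity
          refine mul_le_mul (mul_le_mul hu1 hu2 hG2.le (Real.exp_pos _).le)
            (mul_le_mul hX hY hyk (Real.exp_pos _).le) (by positivity) (by positivity)
      _ = Real.exp ((t1*L + t1*Real.log A + Cu*(t1+1)) + (t2*L + t2*Real.log A + Cu*(t2+1))
          + a*Real.log R + b*Real.log R) := by
          rw [← Real.exp_add, ← Real.exp_add, ← Real.exp_add]
          congr 1
          ring
      _ ≤ Real.exp (-(a*Real.log 2) + -(b*Real.log 2) + (Real.log G'
          + ((t3*L - (a+b+1) - Cl*(t3+1)) + (t4*L - (a+b+1) - Cl*(t4+1))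
            + (t5*L - (a+b+1) - Cl*(t5+1))))) := Real.exp_le_exp.2 bigineq
      _ = Real.exp (-(a*Real.log 2)) * Real.exp (-(b*Real.log 2)) * (Real.exp (Real.log G')
          * (Real.exp (t3*L - (a+b+1) - Cl*(t3+1)) * Real.exp (t4*L - (a+b+1) - Cl*(t4+1))
            * Real.exp (t5*L - (a+b+1) - Cl*(t5+1)))) := by
          rw [← Real.exp_add, ← Real.exp_add, ← Real.exp_add, ← Real.exp_add, ← Real.exp_add]
      _ ≤ (1/2:ℝ)^m * (1/2:ℝ)^k
          * (Real.Gamma γ₁ * Real.Gamma γ₂ * Real.Gamma t3 * (Real.Gamma t4 * Real.Gamma t5)) := by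
          rw [e1, e2, Real.exp_log hG'0]
          have hG3 := Real.Gamma_pos_of_pos ht30
          have hG4 := Real.Gamma_pos_of_pos ht40
          have hG5 := Real.Gamma_pos_of_pos ht50
          have h34 : Real.exp (t3*L - (a+b+1) - Cl*(t3+1)) * Real.exp (t4*L - (a+b+1) - Cl*(t4+1))
              * Real.exp (t5*L - (a+b+1) - Cl*(t5+1))
              ≤ Real.Gamma t3 * (Real.Gamma t4 * Real.Gamma t5) := by
            rw [mul_assoc]
            exact mul_le_mul hl3
              (mul_le_mul hl4 hl5 (Real.exp_pos _).le hG4.le) (by positivity) hG3.le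
          have h2 : G' * (Real.exp (t3*L - (a+b+1) - Cl*(t3+1))
              * Real.exp (t4*L - (a+b+1) - Cl*(t4+1)) * Real.exp (t5*L - (a+b+1) - Cl*(t5+1)))
              ≤ Real.Gamma γ₁ * Real.Gamma γ₂ * Real.Gamma t3 * (Real.Gamma t4 * Real.Gamma t5) := by
            calc G' * (Real.exp (t3*L - (a+b+1) - Cl*(t3+1))
                * Real.exp (t4*L - (a+b+1) - Cl*(t4+1)) * Real.exp (t5*L - (a+b+1) - Cl*(t5+1)))
                ≤ G' * (Real.Gamma t3 * (Real.Gamma t4 * Real.Gamma t5)) :=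
                  mul_le_mul_of_nonneg_left h34 hG'0.le
              _ = Real.Gamma γ₁ * Real.Gamma γ₂ * Real.Gamma t3 * (Real.Gamma t4 * Real.Gamma t5) := by
                  rw [hG'def]; ring
          exact mul_le_mul_of_nonneg_left h2 (by positivity)
  -- conclude summability by comparison with a product of geometric series
  refine Summable.of_norm_bounded_eventually
    (g := fun p : ℕ × ℕ => (1/2:ℝ)^p.1 * (1/2:ℝ)^p.2) ?_ ?_
  · exact Summable.mul_of_nonneg
      (summable_geometric_of_lt_one (by norm_num) (by norm_num))
      (summable_geometric_of_lt_one (by norm_num) (by norm_num))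
      (fun _ => by positivity) (fun _ => by positivity)
  · rw [Filter.eventually_cofinite]
    refine Set.Finite.subset (Set.Finite.prod (Set.finite_Iio NB) (Set.finite_Iio NB)) ?_
    rintro ⟨m, k⟩ hp
    simp only [Set.mem_setOf_eq] at hp
    refine ⟨?_, ?_⟩ <;> simp only [Set.mem_Iio] <;> by_contra h <;> push_neg at h <;>
      exact hp (main m k (by omega))
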